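/- Let F : Ω × ℝ^m → ℝ^P, (x, ζ) ↦ F_x ζ, where Ω ⊂ ℝ^d is open and bounded, each F_x is linear of rank d+1, and x ↦ F_x is α-Hölder continuous (0 < α ≤ 1) on each of finitely many subsets covering Ω. Let B = (∪_{x∈Ω} Im(F_x)) ∩ {b ∈ ℝ^P : b_P = 1}. If P > (d + m)/α then the (P−1)-dimensional Hausdorff measure of the projection of B onto the first P−1 coordinates is zero. Consequently, for almost every a ∈ ℝ^{P−1}, the vector (a_1,…,a_{P−1},1) is not in ∪_{x∈Ω} Im(F_x). -/

import Mathlib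

set_option maxHeartbeats 1000000

open MeasureTheory Set
open scoped NNReal ENNReal

section aux

variable {X Y : Type*} [PseudoMetricSpace X] [PseudoMetricSpace Y]

private lemma aux_holderOnWith_of_dist {C r : ℝ≥0} {f : X → Y} {s : Set X}
    (h : ∀ x ∈ s, ∀ y ∈ s, dist (f x) (f y) ≤ C * dist x y ^ (r : ℝ)) :
    HolderOnWith C r f s := by
  intro x hx y hy
  rw [edist_dist, edist_dist, ENNReal.ofReal_rpow_of_nonneg dist_nonneg r.coe_nonneg,
    ← ENNReal.ofReal_coe_nnreal, ← ENNReal.ofReal_mul C.coe_nonneg]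
  exact ENNReal.ofReal_le_ofReal (h x hx y hy)

private lemma aux_dist_of_holderOnWith {C r : ℝ≥0} {f : X → Y} {s : Set X}
    (h : HolderOnWith C r f s) {x y : X} (hx : x ∈ s) (hy : y ∈ s) :
    dist (f x) (f y) ≤ C * dist x y ^ (r : ℝ) := by
  have h2 := h.edist_le hx hy
  rw [edist_dist, edist_dist, ENNReal.ofReal_rpow_of_nonneg dist_nonneg r.coe_nonneg,
    ← ENNReal.ofReal_coe_nnreal, ← ENNReal.ofReal_mul C.coe_nonneg] at h2
  exact (ENNReal.ofReal_le_ofReal_iff (by positivity)).mp h2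

private lemma aux_rpow_interp {t M α : ℝ} (hα0 : 0 < α) (hα1 : α ≤ 1) (ht : 0 ≤ t)
    (htM : t ≤ M) : t ≤ M ^ (1 - α) * t ^ α := by
  rcases eq_or_lt_of_le ht with h | h
  · rw [← h, Real.zero_rpow hα0.ne', mul_zero]
  · have h1 : t = t ^ (1 - α) * t ^ α := by
      rw [← Real.rpow_add h, sub_add_cancel, Real.rpow_one]
    nth_rewrite 1 [h1]
    exact mul_le_mul_of_nonneg_right (Real.rpow_le_rpow h.le htM (by linarith))
      (Real.rpow_nonneg h.le _)

end aux

section defs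

variable (d m n : ℕ)

private def auxEmb (j : Fin m) (w : {i : Fin m // i ≠ j} → ℝ) : Fin m → ℝ :=
  fun i => if h : i = j then 1 else w ⟨i, h⟩

private lemma auxEmb_sub_norm (j : Fin m) (w w' : {i : Fin m // i ≠ j} → ℝ) :
    ‖auxEmb m j w - auxEmb m j w'‖ ≤ ‖w - w'‖ := by
  rw [pi_norm_le_iff_of_nonneg (norm_nonneg _)]
  intro i
  rcases eq_or_ne i j with h | h
  · simp [auxEmb, h]
  · have h2 := norm_le_pi_norm (w - w') ⟨i, h⟩
    simpa [auxEmb, h] using h2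

variable (F : EuclideanSpace ℝ (Fin d) → ((Fin m → ℝ) →L[ℝ] (Fin (n + 1) → ℝ)))

private noncomputable def auxH (j : Fin m)
    (q : EuclideanSpace ℝ (Fin d) × ({i : Fin m // i ≠ j} → ℝ)) : Fin n → ℝ :=
  fun i => F q.1 (auxEmb m j q.2) i.castSucc / F q.1 (auxEmb m j q.2) (Fin.last n)

private def auxT (S' : Set (EuclideanSpace ℝ (Fin d))) (j : Fin m) (k : ℕ) :
    Set (EuclideanSpace ℝ (Fin d) × ({i : Fin m // i ≠ j} → ℝ)) :=
  {q | q.1 ∈ S' ∧ ‖F q.1‖ ≤ (k : ℝ) ∧ ‖auxEmb m j q.2‖ ≤ (k : ℝ) ∧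
    ((k : ℝ) + 1)⁻¹ ≤ |F q.1 (auxEmb m j q.2) (Fin.last n)|}

end defs

private lemma auxHolder (d m n : ℕ) {α : ℝ} (hα0 : 0 < α) (hα1 : α ≤ 1)
    (F : EuclideanSpace ℝ (Fin d) → ((Fin m → ℝ) →L[ℝ] (Fin (n + 1) → ℝ)))
    {C : ℝ≥0} (S' : Set (EuclideanSpace ℝ (Fin d)))
    (hS : HolderOnWith C ⟨α, hα0.le⟩ F S') (j : Fin m) (k : ℕ) :
    ∃ K : ℝ≥0, HolderOnWith K ⟨α, hα0.le⟩ (auxH d m n F j) (auxT d m n F S' j k) := by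
  set kR : ℝ := (k : ℝ) with hkR
  have hkR0 : 0 ≤ kR := Nat.cast_nonneg k
  set M : ℝ := (C : ℝ) * kR + kR * (2 * kR) ^ (1 - α) with hM
  have hM0 : 0 ≤ M := by positivity
  set K0 : ℝ := (kR + 1) ^ 2 * (2 * kR ^ 2 * M) with hK0
  refine ⟨K0.toNNReal, aux_holderOnWith_of_dist ?_⟩
  rintro p hp q hq
  obtain ⟨hp1, hpF, hpz, hpv⟩ := hp
  obtain ⟨hq1, hqF, hqz, hqv⟩ := hq
  set x := p.1 with hx
  set x' := q.1 with hx'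
  set ζ := auxEmb m j p.2 with hζ
  set ζ' := auxEmb m j q.2 with hζ'
  set A := F x ζ with hA
  set A' := F x' ζ' with hA'
  set v := A (Fin.last n) with hv
  set v' := A' (Fin.last n) with hv'
  set D := dist p q with hD
  have hD0 : (0 : ℝ) ≤ D := dist_nonneg
  have hDα0 : (0 : ℝ) ≤ D ^ α := Real.rpow_nonneg hD0 α
  have hv0 : v ≠ 0 := abs_pos.mp (lt_of_lt_of_le (by positivity) hpv)
  have hv'0 : v' ≠ 0 := abs_pos.mp (lt_of_lt_of_le (by positivity) hqv)
  have hDx : dist x x' ≤ D := by rw [hD, Prod.dist_eq]; exact le_max_left _ _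
  have hdζD : ‖ζ - ζ'‖ ≤ D := by
    refine le_trans (auxEmb_sub_norm m j p.2 q.2) ?_
    rw [← dist_eq_norm, hD, Prod.dist_eq]; exact le_max_right _ _
  have hdζ2k : ‖ζ - ζ'‖ ≤ 2 * kR := by
    have := norm_sub_le ζ ζ'
    linarith
  have hstep2 : ‖ζ - ζ'‖ ≤ (2 * kR) ^ (1 - α) * D ^ α :=
    le_trans (aux_rpow_interp hα0 hα1 (norm_nonneg _) hdζ2k)
      (mul_le_mul_of_nonneg_left (Real.rpow_le_rpow (norm_nonneg _) hdζD hα0.le)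
        (by positivity))
  have hFx : ‖F x - F x'‖ ≤ (C : ℝ) * D ^ α := by
    have h1 := aux_dist_of_holderOnWith hS hp1 hq1
    rw [dist_eq_norm] at h1
    refine h1.trans (mul_le_mul_of_nonneg_left ?_ C.coe_nonneg)
    exact Real.rpow_le_rpow dist_nonneg hDx hα0.le
  have hA'norm : ‖A'‖ ≤ kR ^ 2 := by
    refine le_trans ((F x').le_opNorm ζ') ?_
    have := norm_nonneg ζ'
    nlinarith
  have hAA' : ‖A - A'‖ ≤ M * D ^ α := by
    have t1 : ‖A - A'‖ ≤ ‖F x ζ - F x' ζ‖ + ‖F x' ζ - F x' ζ'‖ := by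
      have := dist_triangle (F x ζ) (F x' ζ) (F x' ζ')
      simpa [dist_eq_norm] using this
    have t2 : ‖F x ζ - F x' ζ‖ ≤ ((C : ℝ) * D ^ α) * kR := by
      have e : F x ζ - F x' ζ = (F x - F x') ζ := by simp
      rw [e]
      refine le_trans ((F x - F x').le_opNorm ζ) ?_
      exact mul_le_mul hFx hpz (norm_nonneg _) (by positivity)
    have t3 : ‖F x' ζ - F x' ζ'‖ ≤ kR * ((2 * kR) ^ (1 - α) * D ^ α) := by
      have e : F x' ζ - F x' ζ' = (F x') (ζ - ζ') := by simp
      rw [e]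
      refine le_trans ((F x').le_opNorm (ζ - ζ')) ?_
      exact mul_le_mul hqF hstep2 (norm_nonneg _) hkR0
    calc ‖A - A'‖ ≤ ((C : ℝ) * D ^ α) * kR + kR * ((2 * kR) ^ (1 - α) * D ^ α) := by
          linarith
      _ = M * D ^ α := by rw [hM]; ring
  have hcoord : ∀ i' : Fin n,
      dist (auxH d m n F j p i') (auxH d m n F j q i') ≤ K0 * D ^ α := by
    intro i'
    have hui : |A i'.castSucc - A' i'.castSucc| ≤ M * D ^ α := by
      have h2 := norm_le_pi_norm (A - A') i'.castSucc
      simp only [Pi.sub_apply, Real.norm_eq_abs] at h2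
      exact h2.trans hAA'
    have hvv : |v - v'| ≤ M * D ^ α := by
      have h2 := norm_le_pi_norm (A - A') (Fin.last n)
      simp only [Pi.sub_apply, Real.norm_eq_abs] at h2
      exact h2.trans hAA'
    have hu' : |A' i'.castSucc| ≤ kR ^ 2 := by
      have h2 := norm_le_pi_norm A' i'.castSucc
      simp only [Real.norm_eq_abs] at h2
      exact h2.trans hA'norm
    have hv'b : |v'| ≤ kR ^ 2 := by
      have h2 := norm_le_pi_norm A' (Fin.last n)
      simp only [Real.norm_eq_abs] at h2
      exact h2.trans hA'norm
    have hHp : auxH d m n F j p i' = A i'.castSucc / v := rfl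
    have hHq : auxH d m n F j q i' = A' i'.castSucc / v' := rfl
    rw [Real.dist_eq, hHp, hHq, div_sub_div _ _ hv0 hv'0, abs_div, abs_mul,
      mul_comm v (A' i'.castSucc)]
    have hnum : |A i'.castSucc * v' - A' i'.castSucc * v| ≤ 2 * kR ^ 2 * (M * D ^ α) := by
      have e : A i'.castSucc * v' - A' i'.castSucc * v =
          (A i'.castSucc - A' i'.castSucc) * v' + A' i'.castSucc * (v' - v) := by ring
      rw [e]
      refine le_trans (abs_add_le _ _) ?_
      rw [abs_mul, abs_mul]
      have habs : |v' - v| = |v - v'| := abs_sub_comm _ _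
      rw [habs]
      nlinarith [abs_nonneg (A i'.castSucc - A' i'.castSucc), abs_nonneg (v - v'),
        abs_nonneg (A' i'.castSucc), abs_nonneg v',
        mul_le_mul hui hv'b (abs_nonneg _) (by positivity : (0:ℝ) ≤ M * D ^ α),
        mul_le_mul hu' hvv (abs_nonneg _) (by positivity : (0:ℝ) ≤ kR ^ 2)]
    have hden : ((kR + 1)⁻¹ * (kR + 1)⁻¹ : ℝ) ≤ |v| * |v'| :=
      mul_le_mul hpv hqv (by positivity) (abs_nonneg _)
    calc |A i'.castSucc * v' - A' i'.castSucc * v| / (|v| * |v'|)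
        ≤ |A i'.castSucc * v' - A' i'.castSucc * v| / ((kR + 1)⁻¹ * (kR + 1)⁻¹) :=
          div_le_div_of_nonneg_left (abs_nonneg _) (by positivity) hden
      _ = (kR + 1) ^ 2 * |A i'.castSucc * v' - A' i'.castSucc * v| := by
          have he : kR + 1 ≠ 0 := by positivity
          field_simp
      _ ≤ (kR + 1) ^ 2 * (2 * kR ^ 2 * (M * D ^ α)) := by
          exact mul_le_mul_of_nonneg_left hnum (by positivity)
      _ = K0 * D ^ α := by rw [hK0]; ring
  have hfinal : dist (auxH d m n F j p) (auxH d m n F j q) ≤ K0 * D ^ α :=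
    (dist_pi_le_iff (by positivity)).mpr hcoord
  exact hfinal.trans (mul_le_mul_of_nonneg_right (Real.le_coe_toNNReal K0) hDα0)

private lemma auxPieceZero (d m n : ℕ) {α : ℝ} (hα0 : 0 < α) (hα1 : α ≤ 1)
    (F : EuclideanSpace ℝ (Fin d) → ((Fin m → ℝ) →L[ℝ] (Fin (n + 1) → ℝ)))
    {C : ℝ≥0} (S' : Set (EuclideanSpace ℝ (Fin d)))
    (hS : HolderOnWith C ⟨α, hα0.le⟩ F S')
    (hP : (d + m : ℝ) < α * (n + 1)) (j : Fin m) (k : ℕ) :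
    μH[(n : ℝ)] (auxH d m n F j '' auxT d m n F S' j k) = 0 := by
  obtain ⟨K, hK⟩ := auxHolder d m n hα0 hα1 F S' hS j k
  have hm : 1 ≤ m := j.pos
  have hcard : Fintype.card {i : Fin m // i ≠ j} = m - 1 := by
    simp [Fintype.card_subtype_compl]
  have hTdim : dimH (auxT d m n F S' j k) ≤ ((d + (m - 1) : ℕ) : ℝ≥0∞) := by
    refine le_trans (dimH_mono (Set.subset_univ _)) ?_
    rw [Real.dimH_univ_eq_finrank]
    rw [Module.finrank_prod, finrank_euclideanSpace_fin,
      Module.finrank_fintype_fun_eq_card, hcard]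
  set rα : ℝ≥0 := ⟨α, hα0.le⟩ with hrα
  have hrα0 : (0 : ℝ≥0) < rα := by
    rw [← NNReal.coe_lt_coe]; exact hα0
  have hcoe : (rα : ℝ) = α := rfl
  have hreal : ((d + (m - 1) : ℕ) : ℝ) < α * n := by
    rw [Nat.cast_add, Nat.cast_sub hm]
    push_cast
    linarith
  have hlt : ((d + (m - 1) : ℕ) : ℝ≥0∞) < ((rα * (n : ℝ≥0) : ℝ≥0) : ℝ≥0∞) := by
    rw [← ENNReal.coe_natCast, ENNReal.coe_lt_coe, ← NNReal.coe_lt_coe]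
    simp only [NNReal.coe_mul, NNReal.coe_natCast]
    rw [hcoe]
    exact hreal
  have hT0 : μH[((rα : ℝ) * (n : ℝ))] (auxT d m n F S' j k) = 0 := by
    have h1 := hausdorffMeasure_of_dimH_lt (lt_of_le_of_lt hTdim hlt)
    have h2 : ((rα * (n : ℝ≥0) : ℝ≥0) : ℝ) = (rα : ℝ) * (n : ℝ) := by push_cast; ring
    rwa [h2] at h1
  have h3 := hK.hausdorffMeasure_image_le hrα0 (by positivity : (0 : ℝ) ≤ (n : ℝ))
  rw [hT0, mul_zero] at h3
  exact le_antisymm h3 zero_le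

/-- Whitney-reduction / Sard-type statement: let `Ω ⊂ ℝ^d` be open and bounded,
`x ↦ F_x` a family of linear maps `ℝ^m → ℝ^P` (`P = n + 1`), each of rank `d + 1`,
which is `α`-Hölder on each of finitely many sets covering `Ω`. Let
`B = (⋃_{x ∈ Ω} Im F_x) ∩ {b : b_P = 1}`. If `P > (d + m)/α` then the projection of `B`
onto the first `P - 1` coordinates has zero `(P-1)`-dimensional Hausdorff measure;
consequently for a.e. `a ∈ ℝ^{P-1}` the vector `(a₁, …, a_{P-1}, 1)` is in no `Im F_x`. -/
theorem stmt18 (d m n N : ℕ) (α : ℝ) (hα0 : 0 < α) (hα1 : α ≤ 1)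
    (Ω : Set (EuclideanSpace ℝ (Fin d))) (hΩo : IsOpen Ω) (hΩb : Bornology.IsBounded Ω)
    (F : EuclideanSpace ℝ (Fin d) → ((Fin m → ℝ) →L[ℝ] (Fin (n + 1) → ℝ)))
    (S : Fin N → Set (EuclideanSpace ℝ (Fin d))) (hcover : Ω ⊆ ⋃ i, S i)
    (C : NNReal) (hHolder : ∀ i, HolderOnWith C ⟨α, hα0.le⟩ F (S i))
    (hrank : ∀ x ∈ Ω, Module.finrank ℝ (LinearMap.range (F x : (Fin m → ℝ) →ₗ[ℝ] (Fin (n + 1) → ℝ))) = d + 1)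
    (hP : (d + m : ℝ) < α * (n + 1)) :
    Measure.hausdorffMeasure (n : ℝ)
        ((fun b : Fin (n + 1) → ℝ => fun i : Fin n => b i.castSucc) ''
          {b : Fin (n + 1) → ℝ |
            (∃ x ∈ Ω, b ∈ LinearMap.range (F x : (Fin m → ℝ) →ₗ[ℝ] (Fin (n + 1) → ℝ))) ∧ b (Fin.last n) = 1}) = 0 ∧
    ∀ᵐ a ∂(volume : Measure (Fin n → ℝ)),
      ¬ ∃ x ∈ Ω, (fun i : Fin (n + 1) => if h : i.val < n then a ⟨i.val, h⟩ else 1) ∈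
          LinearMap.range (F x : (Fin m → ℝ) →ₗ[ℝ] (Fin (n + 1) → ℝ)) := by
  have key : μH[(n : ℝ)]
      ((fun b : Fin (n + 1) → ℝ => fun i : Fin n => b i.castSucc) ''
        {b : Fin (n + 1) → ℝ |
          (∃ x ∈ Ω, b ∈ LinearMap.range (F x : (Fin m → ℝ) →ₗ[ℝ] (Fin (n + 1) → ℝ))) ∧ b (Fin.last n) = 1}) = 0 := by
    refine measure_mono_null ?_
      (measure_iUnion_null fun i : Fin N => measure_iUnion_null fun j : Fin m =>
        measure_iUnion_null fun k : ℕ =>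
          auxPieceZero d m n hα0 hα1 F (S i) (hHolder i) hP j k)
    rintro y ⟨b, ⟨⟨x, hxΩ, hbr⟩, hbl⟩, rfl⟩
    obtain ⟨ζ, hζ⟩ := LinearMap.mem_range.mp hbr
    obtain ⟨i, hxi⟩ := Set.mem_iUnion.mp (hcover hxΩ)
    have hζ0 : ζ ≠ 0 := by
      rintro rfl
      rw [map_zero] at hζ
      rw [← hζ] at hbl
      simp at hbl
    have hj : ∃ j, ζ j ≠ 0 := by
      by_contra h
      push_neg at h
      exact hζ0 (funext h)
    obtain ⟨j, hjζ⟩ := hj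
    set c := ζ j with hc
    set ζ2 : Fin m → ℝ := c⁻¹ • ζ with hζ2
    set w : {i : Fin m // i ≠ j} → ℝ := fun i => ζ2 i.1 with hw
    have hemb : auxEmb m j w = ζ2 := by
      funext i2
      by_cases h : i2 = j
      · subst h
        simp [auxEmb, hζ2, inv_mul_cancel₀ hjζ]
        exact (inv_mul_cancel₀ hjζ).symm
      · simp [auxEmb, h, hw]
    have hFζ2 : F x ζ2 = c⁻¹ • b := by rw [hζ2, _root_.map_smul]; exact congrArg (c⁻¹ • ·) hζ
    have hvlast : F x ζ2 (Fin.last n) = c⁻¹ := by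
      rw [hFζ2]; simp [hbl]
    obtain ⟨k, hk⟩ := exists_nat_ge (max (max ‖F x‖ ‖ζ2‖) |c|)
    have hk1 : ‖F x‖ ≤ (k : ℝ) := le_trans (le_trans (le_max_left _ _) (le_max_left _ _)) hk
    have hk2 : ‖ζ2‖ ≤ (k : ℝ) := le_trans (le_trans (le_max_right _ _) (le_max_left _ _)) hk
    have hk3 : |c| ≤ (k : ℝ) + 1 := le_trans (le_trans (le_max_right _ _) hk) (by linarith)
    have hcpos : (0 : ℝ) < |c| := abs_pos.mpr hjζ
    have hk4 : ((k : ℝ) + 1)⁻¹ ≤ |F x (auxEmb m j w) (Fin.last n)| := by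
      rw [hemb, hvlast, abs_inv]
      exact inv_anti₀ hcpos hk3
    refine Set.mem_iUnion.2 ⟨i, Set.mem_iUnion.2 ⟨j, Set.mem_iUnion.2 ⟨k, ?_⟩⟩⟩
    refine ⟨(x, w), ⟨hxi, hk1, by rw [hemb]; exact hk2, hk4⟩, ?_⟩
    funext i'
    show F x (auxEmb m j w) i'.castSucc / F x (auxEmb m j w) (Fin.last n) = b i'.castSucc
    rw [hemb, hvlast, hFζ2, Pi.smul_apply, smul_eq_mul, mul_comm, mul_div_assoc,
      div_self (inv_ne_zero hjζ), mul_one]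
  refine ⟨key, ?_⟩
  have hveq : μH[(n : ℝ)] = (volume : Measure (Fin n → ℝ)) := by
    rw [← MeasureTheory.hausdorffMeasure_pi_real, Fintype.card_fin]
  have hsub2 : {a : Fin n → ℝ | ∃ x ∈ Ω,
        (fun i : Fin (n + 1) => if h : i.val < n then a ⟨i.val, h⟩ else 1) ∈
          LinearMap.range (F x : (Fin m → ℝ) →ₗ[ℝ] (Fin (n + 1) → ℝ))} ⊆
      (fun b : Fin (n + 1) → ℝ => fun i : Fin n => b i.castSucc) ''
        {b : Fin (n + 1) → ℝ |
          (∃ x ∈ Ω, b ∈ LinearMap.range (F x : (Fin m → ℝ) →ₗ[ℝ] (Fin (n + 1) → ℝ))) ∧ b (Fin.last n) = 1} := by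
    intro a ha
    refine ⟨fun i : Fin (n + 1) => if h : i.val < n then a ⟨i.val, h⟩ else 1, ⟨ha, ?_⟩, ?_⟩
    · simp
    · funext i'
      simp [Fin.is_lt]
  have hvol : volume {a : Fin n → ℝ | ∃ x ∈ Ω,
      (fun i : Fin (n + 1) => if h : i.val < n then a ⟨i.val, h⟩ else 1) ∈
        LinearMap.range (F x : (Fin m → ℝ) →ₗ[ℝ] (Fin (n + 1) → ℝ))} = 0 := by
    rw [← hveq]
    exact measure_mono_null hsub2 key
  rw [ae_iff]
  simpa only [not_not] using hvol
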